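/- Let λ ≥ 0, μ ≥ 0, K₁ ≥ 0 and s ≥ 0. Let c₁, c₂ : [0,s] → ℝ be integrable functions with c₁(r) ≥ λ and c₂(r) ≥ λ for all r ∈ [0,s], let f₁, f₂ ∈ ℝ satisfy |f₁| ≤ K₁ and |f₂| ≤ K₁, and let d : [0,s] → [0,∞) be a continuous function such that |f₁ − f₂| ≤ K₁ d(s) and |c₁(r) − c₂(r)| ≤ K₁ d(r) for all r ∈ [0,s]. Then |f₁ · exp(−∫₀^s c₁(r) dr) − f₂ · exp(−∫₀^s c₂(r) dr)| ≤ K₁(1 + K₁) · e^{(μ + 1 − λ)s} · sup_{r ∈ [0,s]} e^{−μ r} d(r). -/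
import Mathlib


open MeasureTheory

lemma exp_neg_diff_le {L A B : ℝ} (hA : L ≤ A) (hB : L ≤ B) :
    |Real.exp (-A) - Real.exp (-B)| ≤ Real.exp (-L) * |A - B| := by
  have key : ∀ X Y : ℝ, L ≤ X → L ≤ Y → X ≤ Y →
      |Real.exp (-X) - Real.exp (-Y)| ≤ Real.exp (-L) * |X - Y| := by
    intro X Y hX hY hXY
    have h1 : Real.exp (-Y) ≤ Real.exp (-X) := Real.exp_le_exp.mpr (by linarith)
    have h2 : Real.exp (-X) ≤ Real.exp (-L) := Real.exp_le_exp.mpr (by linarith)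
    rw [abs_of_nonneg (by linarith), abs_of_nonpos (by linarith)]
    have h3 : Real.exp (-Y) = Real.exp (-X) * Real.exp (X - Y) := by
      rw [← Real.exp_add]; ring_nf
    have h4 : (X - Y) + 1 ≤ Real.exp (X - Y) := Real.add_one_le_exp _
    have h5 : (0:ℝ) < Real.exp (-X) := Real.exp_pos _
    nlinarith [Real.exp_pos (X - Y)]
  rcases le_total A B with h | h
  · exact key A B hA hB h
  · have := key B A hB hA h
    rwa [abs_sub_comm (Real.exp (-B)) (Real.exp (-A)), abs_sub_comm B A] at this

/-- The pointwise discounted-difference estimate from the proof of Theorem 2.6: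
if `c₁, c₂ ≥ λ` are integrable on `[0,s]`, `|f₁|, |f₂| ≤ K₁`, `d ≥ 0` is continuous on
`[0,s]`, `|f₁ − f₂| ≤ K₁ d(s)` and `|c₁(r) − c₂(r)| ≤ K₁ d(r)` on `[0,s]`, then
`|f₁ e^{-∫₀ˢ c₁} − f₂ e^{-∫₀ˢ c₂}| ≤ K₁(1 + K₁) e^{(μ+1−λ)s} sup_{r ∈ [0,s]} e^{-μr} d(r)`
for any `μ ≥ 0`. -/
theorem discounted_difference_estimate
    (lam μ K₁ s : ℝ) (hlam : 0 ≤ lam) (hμ : 0 ≤ μ) (hK₁ : 0 ≤ K₁) (hs : 0 ≤ s)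
    (c₁ c₂ : ℝ → ℝ)
    (hc₁i : IntervalIntegrable c₁ volume 0 s)
    (hc₂i : IntervalIntegrable c₂ volume 0 s)
    (hc₁ : ∀ r ∈ Set.Icc (0 : ℝ) s, lam ≤ c₁ r)
    (hc₂ : ∀ r ∈ Set.Icc (0 : ℝ) s, lam ≤ c₂ r)
    (f₁ f₂ : ℝ) (hf₁ : |f₁| ≤ K₁) (hf₂ : |f₂| ≤ K₁)
    (dd : ℝ → ℝ) (hdc : ContinuousOn dd (Set.Icc 0 s))
    (hdnn : ∀ r ∈ Set.Icc (0 : ℝ) s, 0 ≤ dd r)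
    (hfd : |f₁ - f₂| ≤ K₁ * dd s)
    (hcd : ∀ r ∈ Set.Icc (0 : ℝ) s, |c₁ r - c₂ r| ≤ K₁ * dd r) :
    |f₁ * Real.exp (-∫ r in (0 : ℝ)..s, c₁ r) -
        f₂ * Real.exp (-∫ r in (0 : ℝ)..s, c₂ r)| ≤
      K₁ * (1 + K₁) * Real.exp ((μ + 1 - lam) * s) *
        sSup ((fun r => Real.exp (-μ * r) * dd r) '' Set.Icc 0 s) := by
  set g : ℝ → ℝ := fun r => Real.exp (-μ * r) * dd r with hg
  set M := sSup (g '' Set.Icc 0 s) with hM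
  have hgc : ContinuousOn g (Set.Icc 0 s) :=
    (Real.continuous_exp.comp (continuous_const.mul continuous_id)).continuousOn.mul hdc
  have hbdd : BddAbove (g '' Set.Icc 0 s) :=
    (isCompact_Icc.image_of_continuousOn hgc).bddAbove
  have hgle : ∀ r ∈ Set.Icc (0:ℝ) s, g r ≤ M := fun r hr =>
    le_csSup hbdd (Set.mem_image_of_mem _ hr)
  have h0mem : (0:ℝ) ∈ Set.Icc (0:ℝ) s := ⟨le_refl 0, hs⟩
  have hMnn : 0 ≤ M := by
    have := hgle 0 h0mem
    have h0 : g 0 = dd 0 := by simp [hg]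
    have := hdnn 0 h0mem
    linarith [hgle 0 h0mem, (show g 0 = dd 0 by simp [hg]) ▸ hdnn 0 h0mem]
  have hdle : ∀ r ∈ Set.Icc (0:ℝ) s, dd r ≤ Real.exp (μ * r) * M := by
    intro r hr
    have h1 := hgle r hr
    have h2 : (0:ℝ) < Real.exp (-μ * r) := Real.exp_pos _
    have h3 : Real.exp (μ * r) * Real.exp (-μ * r) = 1 := by
      rw [← Real.exp_add]; ring_nf; exact Real.exp_zero
    have h4 : g r = Real.exp (-μ * r) * dd r := rfl
    calc dd r = Real.exp (μ * r) * Real.exp (-μ * r) * dd r := by rw [h3]; ring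
      _ = Real.exp (μ * r) * g r := by rw [h4]; ring
      _ ≤ Real.exp (μ * r) * M := mul_le_mul_of_nonneg_left h1 (le_of_lt (Real.exp_pos _))
  set A := ∫ r in (0:ℝ)..s, c₁ r with hA
  set B := ∫ r in (0:ℝ)..s, c₂ r with hB
  have hAge : lam * s ≤ A := by
    have : (∫ r in (0:ℝ)..s, lam) ≤ A :=
      intervalIntegral.integral_mono_on hs intervalIntegrable_const hc₁i
        (fun r hr => hc₁ r hr)
    simpa [mul_comm] using this
  have hBge : lam * s ≤ B := by
    have : (∫ r in (0:ℝ)..s, lam) ≤ B :=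
      intervalIntegral.integral_mono_on hs intervalIntegrable_const hc₂i
        (fun r hr => hc₂ r hr)
    simpa [mul_comm] using this
  have hABdiff : |A - B| ≤ K₁ * M * Real.exp (μ * s) * s := by
    have hsub : A - B = ∫ r in (0:ℝ)..s, (c₁ r - c₂ r) :=
      (intervalIntegral.integral_sub hc₁i hc₂i).symm
    rw [hsub]
    have hbound : ∀ x ∈ Set.uIoc (0:ℝ) s, ‖c₁ x - c₂ x‖ ≤ K₁ * M * Real.exp (μ * s) := by
      intro x hx
      rw [Set.uIoc_of_le hs] at hx
      have hxI : x ∈ Set.Icc (0:ℝ) s := ⟨le_of_lt hx.1, hx.2⟩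
      have h1 := hcd x hxI
      have h2 := hdle x hxI
      have h3 : Real.exp (μ * x) ≤ Real.exp (μ * s) :=
        Real.exp_le_exp.mpr (mul_le_mul_of_nonneg_left hxI.2 hμ)
      calc ‖c₁ x - c₂ x‖ = |c₁ x - c₂ x| := rfl
        _ ≤ K₁ * dd x := h1
        _ ≤ K₁ * (Real.exp (μ * x) * M) := mul_le_mul_of_nonneg_left h2 hK₁
        _ ≤ K₁ * (Real.exp (μ * s) * M) := by
            apply mul_le_mul_of_nonneg_left _ hK₁
            exact mul_le_mul_of_nonneg_right h3 hMnn
        _ = K₁ * M * Real.exp (μ * s) := by ring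
    have := intervalIntegral.norm_integral_le_of_norm_le_const hbound
    rw [sub_zero, abs_of_nonneg hs] at this
    calc |∫ r in (0:ℝ)..s, (c₁ r - c₂ r)| = ‖∫ r in (0:ℝ)..s, (c₁ r - c₂ r)‖ := rfl
      _ ≤ K₁ * M * Real.exp (μ * s) * s := this
  have hexp : |Real.exp (-A) - Real.exp (-B)| ≤ Real.exp (-(lam * s)) * |A - B| :=
    exp_neg_diff_le hAge hBge
  have hsmem : s ∈ Set.Icc (0:ℝ) s := ⟨hs, le_refl s⟩
  have hds : dd s ≤ Real.exp (μ * s) * M := hdle s hsmem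
  -- main split
  have hsplit : |f₁ * Real.exp (-A) - f₂ * Real.exp (-B)| ≤
      |f₁ - f₂| * Real.exp (-A) + |f₂| * |Real.exp (-A) - Real.exp (-B)| := by
    have heq : f₁ * Real.exp (-A) - f₂ * Real.exp (-B) =
        (f₁ - f₂) * Real.exp (-A) + f₂ * (Real.exp (-A) - Real.exp (-B)) := by ring
    rw [heq]
    calc |(f₁ - f₂) * Real.exp (-A) + f₂ * (Real.exp (-A) - Real.exp (-B))|
        ≤ |(f₁ - f₂) * Real.exp (-A)| + |f₂ * (Real.exp (-A) - Real.exp (-B))| := abs_add_le _ _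
      _ = |f₁ - f₂| * |Real.exp (-A)| + |f₂| * |Real.exp (-A) - Real.exp (-B)| := by
          rw [abs_mul, abs_mul]
      _ = |f₁ - f₂| * Real.exp (-A) + |f₂| * |Real.exp (-A) - Real.exp (-B)| := by
          rw [abs_of_pos (Real.exp_pos _)]
  have hEA : Real.exp (-A) ≤ Real.exp (-(lam * s)) := Real.exp_le_exp.mpr (by linarith)
  have hEnn : (0:ℝ) < Real.exp (-(lam * s)) := Real.exp_pos _
  have h1 : |f₁ - f₂| * Real.exp (-A) ≤ (K₁ * (Real.exp (μ * s) * M)) * Real.exp (-(lam * s)) := by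
    have h2 : |f₁ - f₂| ≤ K₁ * (Real.exp (μ * s) * M) :=
      le_trans hfd (mul_le_mul_of_nonneg_left hds hK₁)
    exact mul_le_mul h2 hEA (le_of_lt (Real.exp_pos _)) (by positivity)
  have h2 : |f₂| * |Real.exp (-A) - Real.exp (-B)| ≤
      K₁ * (Real.exp (-(lam * s)) * (K₁ * M * Real.exp (μ * s) * s)) := by
    have h3 : |Real.exp (-A) - Real.exp (-B)| ≤
        Real.exp (-(lam * s)) * (K₁ * M * Real.exp (μ * s) * s) :=
      le_trans hexp (mul_le_mul_of_nonneg_left hABdiff (le_of_lt hEnn))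
    exact mul_le_mul hf₂ h3 (abs_nonneg _) hK₁
  have hcombine : |f₁ * Real.exp (-A) - f₂ * Real.exp (-B)| ≤
      K₁ * Real.exp (μ * s) * M * Real.exp (-(lam * s)) * (1 + K₁ * s) := by
    calc |f₁ * Real.exp (-A) - f₂ * Real.exp (-B)|
        ≤ |f₁ - f₂| * Real.exp (-A) + |f₂| * |Real.exp (-A) - Real.exp (-B)| := hsplit
      _ ≤ (K₁ * (Real.exp (μ * s) * M)) * Real.exp (-(lam * s)) +
          K₁ * (Real.exp (-(lam * s)) * (K₁ * M * Real.exp (μ * s) * s)) := add_le_add h1 h2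
      _ = K₁ * Real.exp (μ * s) * M * Real.exp (-(lam * s)) * (1 + K₁ * s) := by ring
  have hfactor : (1 + K₁ * s) ≤ (1 + K₁) * Real.exp s := by
    have h4 : (1:ℝ) + s ≤ Real.exp s := Real.add_one_le_exp s |>.trans_eq' (by ring)
    nlinarith [Real.exp_pos s]
  have hrhs : Real.exp ((μ + 1 - lam) * s) =
      Real.exp (μ * s) * Real.exp (-(lam * s)) * Real.exp s := by
    rw [← Real.exp_add, ← Real.exp_add]; ring_nf
  calc |f₁ * Real.exp (-A) - f₂ * Real.exp (-B)|
      ≤ K₁ * Real.exp (μ * s) * M * Real.exp (-(lam * s)) * (1 + K₁ * s) := hcombine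
    _ ≤ K₁ * Real.exp (μ * s) * M * Real.exp (-(lam * s)) * ((1 + K₁) * Real.exp s) := by
        apply mul_le_mul_of_nonneg_left hfactor
        positivity
    _ = K₁ * (1 + K₁) * (Real.exp (μ * s) * Real.exp (-(lam * s)) * Real.exp s) * M := by ring
    _ = K₁ * (1 + K₁) * Real.exp ((μ + 1 - lam) * s) * M := by rw [hrhs]
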